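/- Let F be a field of characteristic 2, K = F((X)) the field of formal Laurent series with X-adic valuation v_X. Let φ be an anisotropic quadratic form over F of dimension n, and let φ_K denote its base change to K. If ξ = (ξ₁,…,ξₙ) ∈ Kⁿ is nonzero and a = φ_K(ξ), then v_X(a) = 2·min{ v_X(ξᵢ) : 1 ≤ i ≤ n, ξᵢ ≠ 0 }. -/

import Mathlib

/-!
Background definitions for quadratic forms over fields of characteristic 2,
following the conventions of "Isotropy of quadratic forms over function fields
in characteristic 2".  A quadratic form of dimension `n` over a commutative ring
`R` is represented by a coefficient matrix `c : ι → ι → R` (`ι` a finite index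
type), the associated quadratic map being `x ↦ ∑ i j, c i j * x i * x j`; every
quadratic form on a finite-dimensional vector space (a map satisfying
`φ(av) = a²φ(v)` whose polar form is bilinear) arises this way.
-/

open scoped BigOperators Pointwise Classical

namespace QF2

variable {R S : Type*} [CommRing R] [CommRing S] {ι κ : Type} [Fintype ι] [Fintype κ]

/-- The value at `x` of the quadratic form with coefficient matrix `c`, namely
`∑ i j, c i j * x i * x j`. -/
def eval (c : ι → ι → R) (x : ι → R) : R := ∑ i, ∑ j, c i j * x i * x j

/-- The polar form `b(x,y) = q(x+y) - q(x) - q(y)` of the quadratic form `c`. -/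
def polar (c : ι → ι → R) (x y : ι → R) : R := ∑ i, ∑ j, c i j * (x i * y j + x j * y i)

/-- A quadratic form is isotropic if it vanishes on a nonzero vector. -/
def IsIsotropic (c : ι → ι → R) : Prop := ∃ x : ι → R, x ≠ 0 ∧ eval c x = 0

/-- Anisotropic: not isotropic. -/
abbrev IsAnisotropic (c : ι → ι → R) : Prop := ¬ IsIsotropic c

/-- Base change of a quadratic form along a ring homomorphism. -/
def map (σ : R →+* S) (c : ι → ι → R) : ι → ι → S := fun i j => σ (c i j)

/-- Quasilinear (totally singular): the polar form vanishes identically. -/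
def IsQuasilinear (c : ι → ι → R) : Prop := ∀ x y : ι → R, polar c x y = 0

/-- Nondefective (quasilinear index `i_d = 0`): no nonzero vector of the radical of the
polar form is isotropic. -/
def IsNondefective (c : ι → ι → R) : Prop :=
  ∀ x : ι → R, (∀ y, polar c x y = 0) → eval c x = 0 → x = 0

/-- `d` is isometric to `c`. -/
def Isometric (c : ι → ι → R) (d : κ → κ → R) : Prop :=
  ∃ g : (κ → R) ≃ₗ[R] (ι → R), ∀ x, eval d x = eval c (g x)

/-- `D_R^*(c)`: the set of nonzero represented elements. -/
def reps (c : ι → ι → R) : Set R := {a | a ≠ 0 ∧ ∃ x : ι → R, eval c x = a}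

/-- `D_R^*(c)^m`: products of `m` nonzero represented elements. -/
def repsPow (c : ι → ι → R) (m : ℕ) : Set R :=
  {a | ∃ v : Fin m → R, (∀ k, v k ∈ reps c) ∧ a = ∏ k, v k}

/-- The multiplicative subgroup of `F^*` generated by a set `s` of nonzero elements,
realized as a subset of `F` (products of elements of `s` and their inverses). -/
def genBy {F : Type*} [Field F] (s : Set F) : Set F :=
  ↑(Submonoid.closure (s ∪ Inv.inv '' s))

/-- `⟨D_F^*(c)⟩`: the subgroup generated by the nonzero represented elements. -/
def genGroup {F : Type*} [Field F] (c : ι → ι → F) : Set F := genBy (reps c)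

/-- `⟨D_F^*(c)²⟩`. -/
def genGroup2 {F : Type*} [Field F] (c : ι → ι → F) : Set F := genBy (repsPow c 2)

/-- The scaled quadratic form `a·c`. -/
def smulQF (a : R) (c : ι → ι → R) : ι → ι → R := fun i j => a * c i j

/-- Orthogonal sum of two quadratic forms. -/
def orthSum (c : ι → ι → R) (d : κ → κ → R) : (ι ⊕ κ) → (ι ⊕ κ) → R
  | Sum.inl i, Sum.inl j => c i j
  | Sum.inr i, Sum.inr j => d i j
  | _, _ => 0

lemma eval_add (c : ι → ι → R) (x y : ι → R) :
    eval c (x + y) = eval c x + eval c y + polar c x y := by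
  unfold eval polar
  rw [← Finset.sum_add_distrib, ← Finset.sum_add_distrib]
  refine Finset.sum_congr rfl fun i _ => ?_
  rw [← Finset.sum_add_distrib, ← Finset.sum_add_distrib]
  refine Finset.sum_congr rfl fun j _ => ?_
  simp only [Pi.add_apply]; ring

lemma polar_add_left (c : ι → ι → R) (x x' y : ι → R) :
    polar c (x + x') y = polar c x y + polar c x' y := by
  unfold polar
  rw [← Finset.sum_add_distrib]
  refine Finset.sum_congr rfl fun i _ => ?_
  rw [← Finset.sum_add_distrib]
  refine Finset.sum_congr rfl fun j _ => ?_
  simp only [Pi.add_apply]; ring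

lemma polar_smul_left (c : ι → ι → R) (a : R) (x y : ι → R) :
    polar c (a • x) y = a * polar c x y := by
  unfold polar
  rw [Finset.mul_sum]
  refine Finset.sum_congr rfl fun i _ => ?_
  rw [Finset.mul_sum]
  refine Finset.sum_congr rfl fun j _ => ?_
  simp only [Pi.smul_apply, smul_eq_mul]; ring

lemma eval_smul (c : ι → ι → R) (a : R) (x : ι → R) :
    eval c (a • x) = a ^ 2 * eval c x := by
  unfold eval
  rw [Finset.mul_sum]
  refine Finset.sum_congr rfl fun i _ => ?_
  rw [Finset.mul_sum]
  refine Finset.sum_congr rfl fun j _ => ?_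
  simp only [Pi.smul_apply, smul_eq_mul]; ring

/-- The defect of a quadratic form: the submodule of isotropic vectors lying in the
radical of the polar form. -/
def defectSubmodule (c : ι → ι → R) : Submodule R (ι → R) where
  carrier := {x | (∀ y, polar c x y = 0) ∧ eval c x = 0}
  zero_mem' := by
    constructor
    · intro y; unfold polar; simp
    · unfold eval; simp
  add_mem' := by
    rintro x x' ⟨hx1, hx2⟩ ⟨hx1', hx2'⟩
    refine ⟨fun y => ?_, ?_⟩
    · rw [polar_add_left, hx1 y, hx1' y, add_zero]
    · rw [eval_add, hx2, hx2', hx1 x', add_zero, add_zero]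
  smul_mem' := by
    rintro a x ⟨hx1, hx2⟩
    refine ⟨fun y => ?_, ?_⟩
    · rw [polar_smul_left, hx1 y, mul_zero]
    · rw [eval_smul, hx2, mul_zero]

/-- The quasilinear index (defect) `i_d` of a quadratic form. -/
noncomputable def defectIndex (c : ι → ι → R) : ℕ :=
  Module.finrank R (defectSubmodule c)

/-- The total isotropy index `i_t`: the dimension of a maximal totally isotropic
subspace. -/
noncomputable def totalIndex (c : ι → ι → R) : ℕ :=
  sSup {m | ∃ W : Submodule R (ι → R), (∀ x ∈ W, eval c x = 0) ∧ Module.finrank R W = m}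

/-- The Witt index `i_W = i_t - i_d`. -/
noncomputable def wittIndex (c : ι → ι → R) : ℕ := totalIndex c - defectIndex c

variable {F : Type u} [Field F]

/-- The homogeneous quadratic polynomial `φ(X_1, …, X_n)` attached to a quadratic form. -/
noncomputable def poly (c : ι → ι → F) : MvPolynomial ι F :=
  ∑ i, ∑ j, MvPolynomial.C (c i j) * (MvPolynomial.X i * MvPolynomial.X j)

/-- The canonical map from `F` to the total fraction ring of `A/(f)`; when `f` is
irreducible, the target is the function field `F(f)`. -/
noncomputable def ffHom {A : Type*} [CommRing A] (σ : F →+* A) (f : A) :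
    F →+* FractionRing (A ⧸ Ideal.span {f}) :=
  (algebraMap (A ⧸ Ideal.span {f}) (FractionRing (A ⧸ Ideal.span {f}))).comp
    ((Ideal.Quotient.mk (Ideal.span {f})).comp σ)

/-- The canonical map from `R` into (the total fraction ring of) `R[X_i : i ∈ κ]`;
for a field this is the inclusion into the rational function field `F(X_i : i ∈ κ)`. -/
noncomputable def ratHom (κ : Type) (R : Type*) [CommRing R] :
    R →+* FractionRing (MvPolynomial κ R) :=
  (algebraMap (MvPolynomial κ R) (FractionRing (MvPolynomial κ R))).comp MvPolynomial.C

/-- The canonical map from `F` into the rational function field `F(X)`. -/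
noncomputable def ratHom1 (F : Type u) [Field F] : F →+* FractionRing (Polynomial F) :=
  (algebraMap (Polynomial F) (FractionRing (Polynomial F))).comp Polynomial.C

/-- `φ_{F(ψ)}` is isotropic, where `F(ψ)` is the function field of the quadratic form `ψ`.
When the polynomial of `ψ` is irreducible this is the quotient field of `F[X]/(ψ(X))`;
otherwise (`ψ ≅ ⟨a⟩`, `ψ ≅ ℍ`, or degenerate defective cases) `F(ψ)` is a purely
transcendental extension of `F`, over which isotropy is equivalent to isotropy over `F`. -/
def IsotropicOverFunField (c : ι → ι → F) (d : κ → κ → F) : Prop :=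
  (Irreducible (poly d) → IsIsotropic (map (ffHom MvPolynomial.C (poly d)) c)) ∧
  (¬ Irreducible (poly d) → IsIsotropic c)

/-- Stable birational equivalence of (nondefective) quadratic forms:
`φ_{F(ψ)}` and `ψ_{F(φ)}` are both isotropic. -/
def StbEquiv (c : ι → ι → F) (d : κ → κ → F) : Prop :=
  IsotropicOverFunField c d ∧ IsotropicOverFunField d c

/-- The leading coefficient of a multivariate polynomial with respect to the
lexicographic ordering on monomials. -/
noncomputable def lexLC {l : ℕ} {F : Type*} [CommSemiring F] (f : MvPolynomial (Fin l) F) : F :=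
  if h : f = 0 then 0
  else f.coeff (ofLex ((f.support.image (toLex : (Fin l →₀ ℕ) → Lex (Fin l →₀ ℕ))).max'
    (Finset.Nonempty.image (MvPolynomial.support_nonempty.mpr h) _)))

/-- The coefficient matrix of the tensor product `π ⊗ φ` of the bilinear Pfister form
`π = ⟨⟨a 1, …, a n⟩⟩_b` with the quadratic form `c` (with respect to the standard basis,
`π ⊗ φ ≅ ⊥_{S ⊆ {1,…,n}} (∏_{i ∈ S} a i) φ`). -/
def pfisterMul {n : ℕ} (a : Fin n → R) (c : ι → ι → R) :
    ((Fin n → Bool) × ι) → ((Fin n → Bool) × ι) → R :=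
  fun p q =>
    if p.1 = q.1 then (∏ i, if p.1 i then a i else 1) * c p.2 q.2 else 0



lemma algebraMap_mul_coeff {F : Type*} [Field F] (r : F) (x : LaurentSeries F) (k : ℤ) :
    ((algebraMap F (LaurentSeries F) r) * x).coeff k = r * x.coeff k := by
  rw [HahnSeries.algebraMap_apply', PowerSeries.algebraMap_apply, Algebra.algebraMap_self_apply,
    HahnSeries.ofPowerSeries_C, HahnSeries.C_apply, HahnSeries.coeff_single_zero_mul]

lemma mul_coeff_aux {F : Type*} [Field F] (f g : LaurentSeries F) (m : ℤ)
    (hf : ∀ p < m, f.coeff p = 0) (hg : ∀ p < m, g.coeff p = 0) (k : ℤ) (hk : k ≤ 2 * m) :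
    (f * g).coeff k = if k = 2 * m then f.coeff m * g.coeff m else 0 := by
  rw [HahnSeries.coeff_mul]
  have hterm : ∀ b : ℤ × ℤ, b.1 + b.2 = k → b ≠ (m, m) →
      f.coeff b.1 * g.coeff b.2 = 0 := by
    rintro ⟨p, q⟩ hpq hne
    have hne' : p ≠ m ∨ q ≠ m := by
      by_contra h
      push_neg at h
      exact hne (by rw [h.1, h.2])
    rcases lt_or_ge p m with h | h
    · rw [hf p h, zero_mul]
    · have : q < m := by
        simp only at hpq
        rcases hne' with h' | h' <;> omega
      rw [hg q this, mul_zero]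
  by_cases hkeq : k = 2 * m
  · subst hkeq
    rw [if_pos rfl]
    rw [Finset.sum_eq_single (m, m)]
    · intro b hb hbne
      rw [Finset.mem_addAntidiagonal] at hb
      exact hterm b hb.2.2 hbne
    · intro hmem
      rw [Finset.mem_addAntidiagonal] at hmem
      simp only [HahnSeries.mem_support, not_and, not_not, two_mul] at hmem
      by_cases h1 : f.coeff m = 0
      · rw [h1, zero_mul]
      · by_cases h2 : g.coeff m = 0
        · rw [h2, mul_zero]
        · exact absurd trivial (hmem h1 h2)
  · rw [if_neg hkeq]
    apply Finset.sum_eq_zero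
    intro b hb
    rw [Finset.mem_addAntidiagonal] at hb
    refine hterm b hb.2.2 ?_
    rintro rfl
    exact hkeq (by linarith [hb.2.2] : k = 2 * m)

/-- Let `F` be a field of characteristic 2 and `K = F((X))` the field
of formal Laurent series with `X`-adic valuation `v_X` (the order of a Laurent series).
Let `φ` be an anisotropic quadratic form over `F` and `φ_K` its base change to `K`.
If `ξ` is a nonzero vector over `K` and `a = φ_K(ξ)`, then
`v_X(a) = 2·min{v_X(ξ i) : ξ i ≠ 0}`. -/
theorem stmt2 {F : Type*} [Field F] [CharP F 2] {ι : Type} [Fintype ι]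
    (c : ι → ι → F) (han : IsAnisotropic c)
    (ξ : ι → LaurentSeries F) (hξ : ξ ≠ 0)
    (a : LaurentSeries F) (ha : a = eval (map (algebraMap F (LaurentSeries F)) c) ξ) :
    a ≠ 0 ∧ ∃ i, ξ i ≠ 0 ∧ (∀ j, ξ j ≠ 0 → (ξ i).order ≤ (ξ j).order) ∧
      a.order = 2 * (ξ i).order := by
  classical
  have hS : (Finset.univ.filter (fun i => ξ i ≠ 0)).Nonempty := by
    obtain ⟨i, hi⟩ := Function.ne_iff.mp hξ
    exact ⟨i, Finset.mem_filter.mpr ⟨Finset.mem_univ i, hi⟩⟩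
  obtain ⟨i, hiS, hmin⟩ := Finset.exists_min_image _ (fun i => (ξ i).order) hS
  have hξi : ξ i ≠ 0 := by simpa using (Finset.mem_filter.mp hiS).2
  set m := (ξ i).order with hm
  have hmin' : ∀ j, ξ j ≠ 0 → m ≤ (ξ j).order := fun j hj =>
    hmin j (Finset.mem_filter.mpr ⟨Finset.mem_univ j, hj⟩)
  have hlow : ∀ j, ∀ p < m, (ξ j).coeff p = 0 := by
    intro j p hp
    by_cases hj : ξ j = 0
    · simp [hj]
    · exact HahnSeries.coeff_eq_zero_of_lt_order (lt_of_lt_of_le hp (hmin' j hj))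
  set u : ι → F := fun j => (ξ j).coeff m with hu_def
  have hu : u ≠ 0 := by
    intro h
    exact (mt HahnSeries.coeff_order_eq_zero.mp hξi) (congrFun h i)
  have heval : eval c u ≠ 0 := fun h => han ⟨u, hu, h⟩
  have hcoeff : ∀ k ≤ 2 * m, a.coeff k = if k = 2 * m then eval c u else 0 := by
    intro k hk
    have h1 : a.coeff k = ∑ j, ∑ j',
        ((algebraMap F (LaurentSeries F) (c j j')) * ξ j * ξ j').coeff k := by
      rw [ha]
      unfold eval map
      calc ((∑ j, ∑ j', algebraMap F (LaurentSeries F) (c j j') * ξ j * ξ j') :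
              LaurentSeries F).coeff k
          = (HahnSeries.coeff.addMonoidHom k)
              (∑ j, ∑ j', algebraMap F (LaurentSeries F) (c j j') * ξ j * ξ j') := rfl
        _ = _ := by
            rw [map_sum]
            exact Finset.sum_congr rfl fun j _ => map_sum _ _ _
    have h2 : ∀ j j', ((algebraMap F (LaurentSeries F) (c j j')) * ξ j * ξ j').coeff k
        = if k = 2 * m then c j j' * (u j * u j') else 0 := by
      intro j j'
      rw [mul_assoc, algebraMap_mul_coeff,
        mul_coeff_aux (ξ j) (ξ j') m (hlow j) (hlow j') k hk]
      split <;> simp [hu_def]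
    rw [h1]
    simp only [h2]
    by_cases hkeq : k = 2 * m
    · subst hkeq
      simp only [eq_self_iff_true, if_true]
      unfold eval
      exact Finset.sum_congr rfl fun j _ => Finset.sum_congr rfl fun j' _ => by ring
    · simp [hkeq]
  have hc2m : a.coeff (2 * m) ≠ 0 := by
    rw [hcoeff (2 * m) le_rfl, if_pos rfl]
    exact heval
  have ha0 : a ≠ 0 := HahnSeries.ne_zero_of_coeff_ne_zero hc2m
  refine ⟨ha0, i, hξi, fun j hj => hmin' j hj, ?_⟩
  refine le_antisymm (HahnSeries.order_le_of_coeff_ne_zero hc2m) ?_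
  by_contra hlt
  push_neg at hlt
  have := hcoeff a.order (le_of_lt hlt)
  rw [if_neg (ne_of_lt hlt)] at this
  exact (mt HahnSeries.coeff_order_eq_zero.mp ha0) this


end QF2
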